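/- Let p be a prime and A ⊆ 𝔽_p with |A| > 1. Then there exists d ∈ 𝔽_p with d ≠ 0 such that |A| · (g(d·A) + 1) ≥ 2p − |A| − 1 (equivalently, sup_{d ≠ 0} g(d·A) ≥ 2p/|A| − 2 − 1/|A|). -/

import Mathlib

open Polynomial Finset

section Aux

variable {p : ℕ} [Fact p.Prime]

lemma sum_pow_nonzero (j : ℕ) :
    ∑ u ∈ Finset.univ.erase (0 : ZMod p), u ^ j
      = if (p - 1) ∣ j then (-1 : ZMod p) else 0 := by
  classical
  have h := FiniteField.sum_pow_units (ZMod p) j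
  rw [ZMod.card] at h
  rw [← h]
  refine Finset.sum_bij' (fun u hu => Units.mk0 u (by simp_all [Finset.mem_erase]))
    (fun x _ => (x : ZMod p)) ?_ ?_ ?_ ?_ ?_ <;> simp

variable {A : Finset (ZMod p)}

private noncomputable def hpoly (A : Finset (ZMod p)) : (ZMod p)[X] := ∏ a ∈ A, (X - C a)

lemma hpoly_monic : (hpoly A).Monic :=
  monic_prod_of_monic _ _ fun a _ => monic_X_sub_C a

lemma hpoly_ne_zero : hpoly A ≠ 0 := hpoly_monic.ne_zero

lemma hpoly_natDegree : (hpoly A).natDegree = A.card := by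
  rw [hpoly, natDegree_prod _ _ fun a _ => X_sub_C_ne_zero a]
  simp

lemma hpoly_eval_mem {a : ZMod p} (ha : a ∈ A) : (hpoly A).eval a = 0 := by
  rw [hpoly, eval_prod]
  exact Finset.prod_eq_zero ha (by simp)

lemma hpoly_eval_nmem {y : ZMod p} (hy : y ∉ A) : (hpoly A).eval y ≠ 0 := by
  rw [hpoly, eval_prod]
  refine Finset.prod_ne_zero_iff.mpr fun a ha => ?_
  simp only [eval_sub, eval_X, eval_C]
  exact sub_ne_zero_of_ne (by rintro rfl; exact hy ha)

lemma hpoly_deriv_eval {a : ZMod p} (ha : a ∈ A) :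
    (derivative (hpoly A)).eval a ≠ 0 := by
  have hsplit : hpoly A = (X - C a) * ∏ b ∈ A.erase a, (X - C b) := by
    rw [hpoly, ← Finset.mul_prod_erase A _ ha]
  rw [hsplit]
  rw [derivative_mul]
  simp only [derivative_sub, derivative_X, derivative_C, sub_zero, one_mul, eval_add, eval_mul,
    eval_sub, eval_X, eval_C, sub_self, zero_mul, add_zero]
  rw [eval_prod]
  refine Finset.prod_ne_zero_iff.mpr fun b hb => ?_
  simp only [eval_sub, eval_X, eval_C]
  exact sub_ne_zero_of_ne (Ne.symm (Finset.ne_of_mem_erase hb))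

lemma hpoly_dvd {W : (ZMod p)[X]} (hW : ∀ a ∈ A, W.eval a = 0) : hpoly A ∣ W := by
  classical
  refine Finset.prod_dvd_of_coprime ?_ fun a ha => (dvd_iff_isRoot).mpr (hW a ha)
  intro a ha b hb hab
  exact isCoprime_X_sub_C_of_isUnit_sub (sub_ne_zero_of_ne hab).isUnit

lemma descent (hk2 : 2 ≤ A.card) :
    ∀ j : ℕ, 1 ≤ j → j + 1 ≤ p → ∀ W : (ZMod p)[X], W ≠ 0 → W.natDegree < j * A.card →
      C (j : ZMod p) * derivative (hpoly A) * W = hpoly A * derivative W → False := by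
  intro j
  induction j with
  | zero => omega
  | succ j ih =>
    intro _ hjp W hW0 hWdeg hrel
    have hp2 : 2 ≤ p := (Fact.out : p.Prime).two_le
    have hcast : ((j + 1 : ℕ) : ZMod p) ≠ 0 := by
      rw [Ne, ZMod.natCast_eq_zero_iff]
      intro hdvd
      have := Nat.le_of_dvd (by omega) hdvd
      omega
    have hvanish : ∀ a ∈ A, W.eval a = 0 := by
      intro a ha
      have h1 := congrArg (eval a) hrel
      simp only [eval_mul, eval_C, hpoly_eval_mem ha, zero_mul] at h1
      rcases mul_eq_zero.mp h1 with h2 | h2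
      · rcases mul_eq_zero.mp h2 with h3 | h3
        · exact absurd h3 hcast
        · exact absurd h3 (hpoly_deriv_eval ha)
      · exact h2
    have hdvd : hpoly A ∣ W := hpoly_dvd hvanish
    have hdegk : A.card ≤ W.natDegree := by
      have := natDegree_le_of_dvd hdvd hW0
      rwa [hpoly_natDegree] at this
    rcases Nat.eq_zero_or_pos j with hj0 | hj1
    · subst hj0; omega
    · obtain ⟨W1, rfl⟩ := hdvd
      have hW10 : W1 ≠ 0 := right_ne_zero_of_mul hW0
      have hmuldeg : (hpoly A * W1).natDegree = A.card + W1.natDegree := by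
        rw [natDegree_mul hpoly_ne_zero hW10, hpoly_natDegree]
      have hdeg1 : W1.natDegree < j * A.card := by
        have hsucc : (j + 1) * A.card = j * A.card + A.card := by ring
        omega
      refine ih hj1 (by omega) W1 hW10 hdeg1 ?_
      have hrel2 : hpoly A * (C ((j + 1 : ℕ) : ZMod p) * derivative (hpoly A) * W1) =
          hpoly A * (derivative (hpoly A) * W1 + hpoly A * derivative W1) := by
        rw [derivative_mul] at hrel
        ring_nf
        ring_nf at hrel
        linear_combination hrel
      have hrel3 := mul_left_cancel₀ hpoly_ne_zero hrel2
      have hc : (((j : ℕ) + 1 : ℕ) : ZMod p) = ((j : ℕ) : ZMod p) + 1 := by push_cast; ring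
      rw [hc] at hrel3
      rw [C_add, C_1] at hrel3
      linear_combination hrel3

lemma prod_coeff_bound {ι : Type*} (s : Finset ι) (f : ι → Polynomial (Polynomial (ZMod p)))
    (hf : ∀ i ∈ s, ∀ j m : ℕ, 1 < j + m → ((f i).coeff j).coeff m = 0) :
    ∀ j m : ℕ, s.card < j + m → (((∏ i ∈ s, f i).coeff j).coeff m) = 0 := by
  classical
  induction s using Finset.cons_induction with
  | empty =>
    intro j m hjm
    rw [Finset.prod_empty]
    rcases Nat.eq_zero_or_pos j with hj | hj
    · subst hj
      simp only [coeff_one, if_true, eq_self_iff_true]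
      have hm : m ≠ 0 := by omega
      simp [Polynomial.coeff_one, hm]
    · have hj' : j ≠ 0 := by omega
      simp [coeff_one, hj']
  | cons x s hx ih =>
    intro j m hjm
    rw [Finset.prod_cons, Polynomial.coeff_mul, Polynomial.finset_sum_coeff]
    refine Finset.sum_eq_zero fun q hq => ?_
    rw [Polynomial.coeff_mul]
    refine Finset.sum_eq_zero fun r hr => ?_
    have hq' := Finset.HasAntidiagonal.mem_antidiagonal.mp hq
    have hr' := Finset.HasAntidiagonal.mem_antidiagonal.mp hr
    have hcard : s.card < (Finset.cons x s hx).card := by rw [Finset.card_cons]; omega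
    rcases Nat.lt_or_ge 1 (q.1 + r.1) with hbig | hsmall
    · rw [hf x (Finset.mem_cons_self x s) q.1 r.1 hbig, zero_mul]
    · have : s.card < q.2 + r.2 := by
        rw [Finset.card_cons] at hjm
        omega
      rw [ih (fun i hi => hf i (Finset.mem_cons_of_mem hi)) q.2 r.2 this, mul_zero]

lemma factor_coeff_bound (i : ℕ) (a : ZMod p) :
    ∀ j m : ℕ, 1 < j + m →
      (((C (X - C a) + C (C ((i : ℕ) : ZMod p)) * X : Polynomial (Polynomial (ZMod p))).coeff j).coeff m) = 0 := by
  intro j m hjm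
  have h0 : (C (X - C a) + C (C ((i : ℕ) : ZMod p)) * X : Polynomial (Polynomial (ZMod p))).coeff j
      = (if j = 0 then X - C a else 0) + (if j = 1 then C ((i : ℕ) : ZMod p) else 0) := by
    rw [Polynomial.coeff_add, Polynomial.coeff_C, Polynomial.coeff_C_mul, Polynomial.coeff_X]
    split_ifs <;> simp <;> omega
  rw [h0]
  rcases Nat.lt_or_ge j 2 with hj | hj
  · interval_cases j
    · have hm : 2 ≤ m := by omega
      rw [if_pos rfl, if_neg (by omega), add_zero, Polynomial.coeff_sub,
        Polynomial.coeff_X, Polynomial.coeff_C, if_neg (by omega), if_neg (by omega)]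
      ring
    · have hm : 1 ≤ m := by omega
      rw [if_neg (by omega), if_pos rfl, zero_add, Polynomial.coeff_C, if_neg (by omega)]
  · rw [if_neg (by omega), if_neg (by omega), add_zero, Polynomial.coeff_zero]

lemma blocking_false (hk2 : 2 ≤ A.card) (hkp : A.card + 1 ≤ p)
    (N : ℕ) (hN1 : 1 ≤ N) (hNp : N + 2 ≤ p) (hNk : N * A.card + A.card + 2 ≤ 2 * p)
    (hblock : ∀ u c : ZMod p, u ≠ 0 → ∃ i : ℕ, 1 ≤ i ∧ i ≤ N ∧ c + (i : ZMod p) * u ∈ A) :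
    False := by
  classical
  have hp2 : 2 ≤ p := (Fact.out : p.Prime).two_le
  set h : (ZMod p)[X] := hpoly A with hh
  set Fp : Polynomial (Polynomial (ZMod p)) :=
    ∏ q ∈ (Finset.Icc 1 N) ×ˢ A, (C (X - C q.2) + C (C ((q.1 : ℕ) : ZMod p)) * X) with hFp
  have hcardprod : ((Finset.Icc 1 N) ×ˢ A).card = N * A.card := by
    rw [Finset.card_product, Nat.card_Icc]
    simp [Nat.mul_comm]
  -- coefficient bound
  have hQ : ∀ j m : ℕ, N * A.card < j + m → ((Fp.coeff j).coeff m) = 0 := by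
    intro j m hjm
    refine prod_coeff_bound _ _ (fun q _ => factor_coeff_bound q.1 q.2) j m ?_
    rwa [hcardprod]
  have hFdeg : Fp.natDegree ≤ N * A.card := by
    refine natDegree_le_iff_coeff_eq_zero.mpr fun j hj => ?_
    ext m
    rw [Polynomial.coeff_zero]
    exact hQ j m (by omega)
  have hF0 : Fp.coeff 0 = h ^ N := by
    have h1 : Polynomial.constantCoeff Fp = ∏ q ∈ (Finset.Icc 1 N) ×ˢ A, (X - C q.2) := by
      rw [hFp, map_prod]
      refine Finset.prod_congr rfl fun q _ => ?_
      simp [Polynomial.constantCoeff_apply, Polynomial.coeff_add, Polynomial.coeff_C_mul]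
    rw [Polynomial.constantCoeff_apply] at h1
    rw [h1, Finset.prod_product, hh, hpoly]
    have : ∀ x ∈ Finset.Icc 1 N, (∏ y ∈ A, (X - C ((x, y).2 : ZMod p))) = ∏ a ∈ A, (X - C a) := by
      intro x _; rfl
    rw [Finset.prod_congr rfl this, Finset.prod_const, Nat.card_Icc]
    norm_num
  -- evaluation of Fp at (u, c) vanishes for u ≠ 0
  have hFeval : ∀ u c : ZMod p, u ≠ 0 → Fp.eval₂ (Polynomial.evalRingHom c) u = 0 := by
    intro u c hu
    have hprod : Fp.eval₂ (Polynomial.evalRingHom c) u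
        = ∏ q ∈ (Finset.Icc 1 N) ×ˢ A, ((c - q.2) + ((q.1 : ℕ) : ZMod p) * u) := by
      rw [hFp, ← Polynomial.coe_eval₂RingHom, map_prod]
      refine Finset.prod_congr rfl fun q _ => ?_
      simp [Polynomial.coe_eval₂RingHom, Polynomial.eval₂_add, Polynomial.eval₂_mul,
        Polynomial.eval₂_C, Polynomial.eval₂_X]
    obtain ⟨i, hi1, hiN, hia⟩ := hblock u c hu
    rw [hprod]
    refine Finset.prod_eq_zero (i := (i, c + (i : ZMod p) * u)) (Finset.mem_product.mpr
      ⟨Finset.mem_Icc.mpr ⟨hi1, hiN⟩, hia⟩) ?_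
    ring
  -- the correction polynomial T
  set T : (ZMod p)[X] :=
    ∑ j ∈ (Finset.range (N * A.card + 1)).filter (fun j => j ≠ 0 ∧ (p - 1) ∣ j), Fp.coeff j with hT
  have hTcoeff : ∀ m : ℕ, N * A.card < m + (p - 1) → T.coeff m = 0 := by
    intro m hm
    rw [hT, Polynomial.finset_sum_coeff]
    refine Finset.sum_eq_zero fun j hj => ?_
    obtain ⟨hjr, hj0, hjd⟩ := by
      simpa using (Finset.mem_filter.mp hj)
    have hjge : p - 1 ≤ j := Nat.le_of_dvd (by omega) hjd
    exact hQ j m (by omega)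
  have hTeval : ∀ c : ZMod p, T.eval c = - (h.eval c) ^ N := by
    intro c
    have hzero : ∑ u ∈ Finset.univ.erase (0 : ZMod p),
        Fp.eval₂ (Polynomial.evalRingHom c) u = 0 :=
      Finset.sum_eq_zero fun u hu => hFeval u c (Finset.ne_of_mem_erase hu)
    have hexpand : ∀ u : ZMod p, Fp.eval₂ (Polynomial.evalRingHom c) u
        = ∑ j ∈ Finset.range (N * A.card + 1), (Fp.coeff j).eval c * u ^ j := by
      intro u
      rw [Polynomial.eval₂_eq_sum_range' (Polynomial.evalRingHom c) (lt_of_le_of_lt hFdeg (Nat.lt_succ_self _)) u]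
      rfl
    rw [Finset.sum_congr rfl (fun u _ => hexpand u), Finset.sum_comm] at hzero
    have hswap : ∀ j ∈ Finset.range (N * A.card + 1),
        (∑ u ∈ Finset.univ.erase (0 : ZMod p), (Fp.coeff j).eval c * u ^ j)
          = (Fp.coeff j).eval c * (if (p - 1) ∣ j then (-1 : ZMod p) else 0) := by
      intro j _
      rw [← Finset.mul_sum, sum_pow_nonzero]
    rw [Finset.sum_congr rfl hswap] at hzero
    simp only [mul_ite, mul_neg_one, mul_zero] at hzero
    rw [Finset.sum_ite, Finset.sum_const_zero, add_zero] at hzero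
    -- hzero : ∑ j ∈ filter ((p-1) ∣ ·) (range (N*A.card+1)), -((Fp.coeff j).eval c) = 0
    have h0mem : (0 : ℕ) ∈ (Finset.range (N * A.card + 1)).filter (fun j => (p - 1) ∣ j) := by
      simp
    rw [← Finset.add_sum_erase _ _ h0mem] at hzero
    have hseteq : ((Finset.range (N * A.card + 1)).filter (fun j => (p - 1) ∣ j)).erase 0
        = (Finset.range (N * A.card + 1)).filter (fun j => j ≠ 0 ∧ (p - 1) ∣ j) := by
      ext j
      simp only [Finset.mem_erase, Finset.mem_filter, Finset.mem_range]
      tauto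
    rw [hseteq] at hzero
    have hTev : T.eval c = ∑ j ∈ (Finset.range (N * A.card + 1)).filter (fun j => j ≠ 0 ∧ (p - 1) ∣ j),
        (Fp.coeff j).eval c := by
      rw [hT, Polynomial.eval_finset_sum]
    have hsum := hzero
    rw [hTev]
    have hf0 : (Fp.coeff 0).eval c = (h.eval c) ^ N := by rw [hF0, Polynomial.eval_pow]
    rw [hf0, Finset.sum_neg_distrib] at hsum
    linear_combination -hsum
  
  by_cases hcase : N * A.card ≤ p - 1
  · -- T is constant: immediate contradiction
    have hTd : T.natDegree ≤ 0 :=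
      natDegree_le_iff_coeff_eq_zero.mpr fun m hm => hTcoeff m (by omega)
    have hTC := Polynomial.eq_C_of_natDegree_le_zero hTd
    obtain ⟨a, ha⟩ := Finset.card_pos.mp (by omega : 0 < A.card)
    have hAne : ∃ y, y ∉ A := by
      by_contra hall
      push_neg at hall
      have huniv : A = Finset.univ := Finset.eq_univ_iff_forall.mpr hall
      have : A.card = p := by rw [huniv, Finset.card_univ, ZMod.card]
      omega
    obtain ⟨y, hy⟩ := hAne
    have e1 := hTeval a
    have e2 := hTeval y
    rw [hTC, Polynomial.eval_C] at e1 e2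
    have hz : h.eval a = 0 := hpoly_eval_mem ha
    have hnz : h.eval y ≠ 0 := hpoly_eval_nmem hy
    rw [hz, zero_pow (by omega : N ≠ 0), neg_zero] at e1
    rw [e1] at e2
    exact (neg_ne_zero.mpr (pow_ne_zero _ hnz)) e2.symm
  · push_neg at hcase
    obtain ⟨e, he1, he2⟩ : ∃ e, N * A.card = (p - 1) + e ∧ 1 ≤ e :=
      ⟨N * A.card - (p - 1), by omega, by omega⟩
    have hek : e + A.card + 1 ≤ p := by omega
    set P : (ZMod p)[X] := h ^ N with hP
    have hPdeg : P.natDegree = N * A.card := by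
      rw [hP, hpoly_monic.natDegree_pow, hpoly_natDegree]
    set Xp : (ZMod p)[X] := X ^ p with hXp
    have hXpM : Xp.Monic := hXp ▸ monic_X_pow p
    set V : (ZMod p)[X] := P %ₘ Xp with hV
    set W : (ZMod p)[X] := P /ₘ Xp with hW
    have hsplit : Xp * W + V = P := by
      rw [hV, hW, add_comm]
      exact Polynomial.modByMonic_add_div P Xp
    have hVlt : V.natDegree < p := by
      rcases eq_or_ne V 0 with h0 | h0
      · rw [h0, natDegree_zero]; omega
      · have hdeg := Polynomial.degree_modByMonic_lt P hXpM
        rw [← hV] at hdeg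
        have hx : Xp.degree = (p : ℕ) := by rw [hXp, degree_X_pow]
        rw [hx] at hdeg
        exact (Polynomial.natDegree_lt_iff_degree_lt h0).mpr hdeg
    have hWdeg : W.natDegree = N * A.card - p := by
      rw [hW, Polynomial.natDegree_divByMonic P hXpM, hPdeg, hXp, natDegree_X_pow]
    have hW0 : W ≠ 0 := by
      intro h0
      rw [h0, mul_zero, zero_add] at hsplit
      rw [← hsplit] at hPdeg
      omega
    have hTdeg : T.natDegree ≤ e :=
      natDegree_le_iff_coeff_eq_zero.mpr fun m hm => hTcoeff m (by omega)
    have hXWdeg : (X * W).natDegree ≤ e := by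
      have := Polynomial.natDegree_mul_le (p := (X : (ZMod p)[X])) (q := W)
      have hXdeg : (X : (ZMod p)[X]).natDegree = 1 := natDegree_X
      omega
    have hZeval : ∀ y : ZMod p, (X * W + V + T).eval y = 0 := by
      intro y
      have hy1 : P.eval y = y * W.eval y + V.eval y := by
        rw [← hsplit]
        simp only [Polynomial.eval_add, Polynomial.eval_mul, hXp, Polynomial.eval_pow,
          Polynomial.eval_X]
        rw [ZMod.pow_card]
      have hy2 := hTeval y
      have hy3 : (h.eval y) ^ N = P.eval y := by rw [hP, Polynomial.eval_pow]
      simp only [Polynomial.eval_add, Polynomial.eval_mul, Polynomial.eval_X]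
      rw [hy2, hy3, hy1]
      ring
    have hZ : X * W + V + T = 0 := by
      refine Polynomial.eq_zero_of_natDegree_lt_card_of_eval_eq_zero' _ Finset.univ
        (fun y _ => hZeval y) ?_
      rw [Finset.card_univ, ZMod.card]
      have b1 := Polynomial.natDegree_add_le (X * W + V) T
      have b2 := Polynomial.natDegree_add_le (X * W) V
      omega
    have hVe : V.natDegree ≤ e := by
      have hVeq : V = -(X * W) - T := by linear_combination hZ
      have b3 := Polynomial.natDegree_sub_le (-(X * W)) T
      have b4 : (-(X * W)).natDegree = (X * W).natDegree := Polynomial.natDegree_neg _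
      rw [← hVeq] at b3
      omega
    have hDXp : derivative Xp = 0 := by
      rw [hXp, derivative_X_pow]
      simp [ZMod.natCast_self]
    have hD1 : derivative P = Xp * derivative W + derivative V := by
      rw [← hsplit, derivative_add, derivative_mul, hDXp, zero_mul, zero_add]
    have hD2 : derivative P = C ((N : ℕ) : ZMod p) * h ^ (N - 1) * derivative h := by
      rw [hP, Polynomial.derivative_pow]
    set D : (ZMod p)[X] := C ((N : ℕ) : ZMod p) * derivative h * W - h * derivative W with hDdef
    have hkey : h ^ (N - 1) * D = W * derivative V - V * derivative W := by
      have hpow : h ^ (N - 1) * h = h ^ N := by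
        rw [← pow_succ]
        congr 1
        omega
      calc h ^ (N - 1) * D
          = (C ((N : ℕ) : ZMod p) * h ^ (N - 1) * derivative h) * W
            - (h ^ (N - 1) * h) * derivative W := by rw [hDdef]; ring
        _ = derivative P * W - P * derivative W := by rw [hpow, ← hD2, hP]
        _ = (Xp * derivative W + derivative V) * W - (Xp * W + V) * derivative W := by
            rw [hD1, hsplit]
        _ = W * derivative V - V * derivative W := by ring
    have hD0 : D = 0 := by
      by_contra hDne
      have hL : (h ^ (N - 1) * D).natDegree = (N - 1) * A.card + D.natDegree := by
        rw [natDegree_mul (pow_ne_zero _ hpoly_ne_zero) hDne, hpoly_monic.natDegree_pow,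
          hpoly_natDegree]
      have r1a := Polynomial.natDegree_mul_le (p := W) (q := derivative V)
      have r1b := Polynomial.natDegree_derivative_le V
      have r2a := Polynomial.natDegree_mul_le (p := V) (q := derivative W)
      have r2b := Polynomial.natDegree_derivative_le W
      have r3 := Polynomial.natDegree_sub_le (W * derivative V) (V * derivative W)
      rw [hkey] at hL
      have hNk1 : (N - 1) * A.card + A.card = N * A.card := by
        have hN' : N - 1 + 1 = N := by omega
        calc (N - 1) * A.card + A.card = (N - 1 + 1) * A.card := by ring
          _ = N * A.card := by rw [hN']
      omega
    have hfin : C ((N : ℕ) : ZMod p) * derivative h * W = h * derivative W := by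
      have := hD0
      rw [hDdef] at this
      linear_combination this
    exact descent hk2 N hN1 (by omega) W hW0 (by omega) hfin

end Aux

/-- The largest gap of `A ⊆ 𝔽_p`: the largest `g` such that some translate of the
residues of `{1, …, g}` is disjoint from `A`. -/
noncomputable def gap (p : ℕ) (A : Finset (ZMod p)) : ℕ :=
  sSup {g : ℕ | ∃ t : ZMod p, ∀ i : ℕ, 1 ≤ i → i ≤ g → ((i : ZMod p) + t) ∉ A}

section GapAux

variable {p : ℕ} [Fact p.Prime]

lemma gap_set_le {A : Finset (ZMod p)} (hA : 2 ≤ A.card) {g : ℕ}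
    (hg : ∃ t : ZMod p, ∀ i : ℕ, 1 ≤ i → i ≤ g → ((i : ZMod p) + t) ∉ A) : g ≤ p - 2 := by
  obtain ⟨t, ht⟩ := hg
  by_contra hgt
  push_neg at hgt
  have hp2 : 2 ≤ p := (Fact.out : p.Prime).two_le
  have hsub : A ⊆ {t} := by
    intro b hb
    rw [Finset.mem_singleton]
    by_contra hbt
    have hbt' : b - t ≠ 0 := sub_ne_zero_of_ne hbt
    have h1 : 1 ≤ (b - t).val := by
      rcases Nat.eq_zero_or_pos (b - t).val with h0 | h0
      · exact absurd ((ZMod.val_eq_zero _).mp h0) hbt'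
      · exact h0
    have h2 : (b - t).val ≤ g := by
      have := ZMod.val_lt (b - t)
      omega
    have h3 := ht (b - t).val h1 h2
    apply h3
    have h4 : (((b - t).val : ℕ) : ZMod p) = b - t := ZMod.natCast_rightInverse _
    rw [h4]
    have : b - t + t = b := by ring
    rw [this]
    exact hb
  have := Finset.card_le_card hsub
  rw [Finset.card_singleton] at this
  omega

lemma le_gap {A : Finset (ZMod p)} (hA : 2 ≤ A.card) {g : ℕ}
    (hg : ∃ t : ZMod p, ∀ i : ℕ, 1 ≤ i → i ≤ g → ((i : ZMod p) + t) ∉ A) :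
    g ≤ gap p A :=
  le_csSup ⟨p - 2, fun _ hx => gap_set_le hA hx⟩ hg

end GapAux

theorem stmt_3 (p : ℕ) (hp : p.Prime) (A : Finset (ZMod p)) (hA : 1 < A.card) :
    ∃ d : ZMod p, d ≠ 0 ∧
      (A.card : ℤ) * (gap p (A.image (fun a => d * a)) + 1) ≥ 2 * p - A.card - 1 := by
  haveI : Fact p.Prime := ⟨hp⟩
  have hp2 : 2 ≤ p := hp.two_le
  have hcardle : A.card ≤ p := by
    have := Finset.card_le_card (Finset.subset_univ A)
    rwa [Finset.card_univ, ZMod.card] at this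
  by_cases hk : A.card = p
  · refine ⟨1, one_ne_zero, ?_⟩
    have h1 : (1 : ℤ) ≤ (gap p (A.image (fun a => 1 * a)) : ℤ) + 1 := by omega
    have h2 : (A.card : ℤ) * 1 ≤ (A.card : ℤ) * ((gap p (A.image (fun a => 1 * a)) : ℤ) + 1) := by
      apply mul_le_mul_of_nonneg_left h1 (by positivity)
    rw [hk] at h2 ⊢
    omega
  · by_contra hcon
    push_neg at hcon
    have hkp : A.card + 1 ≤ p := by omega
    -- the threshold N
    set N : ℕ := (2 * p - A.card - 2) / A.card with hN
    have hM : A.card ≤ 2 * p - A.card - 2 := by omega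
    have hN1 : 1 ≤ N := by
      rw [hN]
      exact (Nat.one_le_div_iff (by omega)).mpr hM
    have hNk : N * A.card + A.card + 2 ≤ 2 * p := by
      have := Nat.div_mul_le_self (2 * p - A.card - 2) A.card
      rw [hN]
      omega
    have hNp : N + 2 ≤ p := by
      have h2le : 2 ≤ A.card := hA
      have : N * 2 ≤ N * A.card := Nat.mul_le_mul_left N h2le
      omega
    -- every d has small gap
    have hgaple : ∀ d : ZMod p, d ≠ 0 → gap p (A.image (fun a => d * a)) + 1 ≤ N := by
      intro d hd
      have hlt := hcon d hd
      have hint : (A.card : ℤ) * (gap p (A.image (fun a => d * a)) + 1) ≤ 2 * p - A.card - 2 := by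
        omega
      have hnat : A.card * (gap p (A.image (fun a => d * a)) + 1) ≤ 2 * p - A.card - 2 := by
        have hcast : ((2 * p - A.card - 2 : ℕ) : ℤ) = 2 * (p : ℤ) - A.card - 2 := by
          push_cast
          omega
        rw [← hcast] at hint
        exact_mod_cast hint
      rw [hN]
      rw [Nat.le_div_iff_mul_le (by omega : 0 < A.card), mul_comm]
      exact hnat
    -- blocking property
    have hblock : ∀ u c : ZMod p, u ≠ 0 → ∃ i : ℕ, 1 ≤ i ∧ i ≤ N ∧ c + (i : ZMod p) * u ∈ A := by
      intro u c hu
      by_contra hnone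
      push_neg at hnone
      have hmem : ∃ t : ZMod p, ∀ i : ℕ, 1 ≤ i → i ≤ N →
          ((i : ZMod p) + t) ∉ (A.image (fun a => u⁻¹ * a)) := by
        refine ⟨u⁻¹ * c, fun i hi1 hiN hin => ?_⟩
        obtain ⟨a, ha, hEq⟩ := Finset.mem_image.mp hin
        have : a = c + (i : ZMod p) * u := by
          have hu' : u * u⁻¹ = 1 := mul_inv_cancel₀ hu
          calc a = u * (u⁻¹ * a) := by rw [← mul_assoc, hu', one_mul]
            _ = u * ((i : ZMod p) + u⁻¹ * c) := by rw [hEq]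
            _ = c + (i : ZMod p) * u := by
                rw [mul_add, ← mul_assoc, hu', one_mul]
                ring
        exact hnone i hi1 hiN (this ▸ ha)
      have hcard2 : 2 ≤ (A.image (fun a => u⁻¹ * a)).card := by
        rw [Finset.card_image_of_injective A (mul_right_injective₀ (inv_ne_zero hu))]
        exact hA
      have := le_gap hcard2 hmem
      have := hgaple u⁻¹ (inv_ne_zero hu)
      omega
    exact blocking_false hA hkp N hN1 hNp hNk hblock
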